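/- arXiv:1009.3547 — 3 statements merged into one kernel-verified Lean document; each statement's English description precedes it below -/
import Mathlib

section
/- Let w_1,…,w_d ∈ ℝ^n and let μ : ℂ^d → ℝ^n be given by μ(z) = π Σ_{α=1}^d |z_α|² w_α. Then μ is a proper map (the preimage of every compact subset of ℝ^n is compact) if and only if there exists s ∈ ℝ^d with s_α ≥ 0 for all α such that the set { t ∈ ℝ^d : t_α ≥ 0 for all α, and Σ_{α=1}^d t_α w_α = Σ_{α=1}^d s_α w_α } is compact. -/
open Metric Bornology

/-- Guillemin–Ginzburg–Karshon: the moment map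
μ(z) = π Σ_α |z_α|² w_α is proper iff there is s with s_α ≥ 0 such that the
fiber polytope { t : t_α ≥ 0, Σ t_α w_α = Σ s_α w_α } is compact. -/
theorem moment_map_proper_iff (d n : ℕ)
    (w : Fin d → EuclideanSpace ℝ (Fin n))
    (μ : (Fin d → ℂ) → EuclideanSpace ℝ (Fin n))
    (hμ : ∀ z, μ z = Real.pi • ∑ α, ‖z α‖ ^ 2 • w α) :
    (∀ K : Set (EuclideanSpace ℝ (Fin n)), IsCompact K → IsCompact (μ ⁻¹' K)) ↔
      ∃ s : Fin d → ℝ, (∀ α, 0 ≤ s α) ∧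
        IsCompact {t : Fin d → ℝ | (∀ α, 0 ≤ t α) ∧
          ∑ α, t α • w α = ∑ α, s α • w α} := by
  set ρ : (Fin d → ℝ) → EuclideanSpace ℝ (Fin n) := fun t => ∑ α, t α • w α with hρ
  have hρcont : Continuous ρ := by
    apply continuous_finset_sum
    intro α _
    exact (continuous_apply α).smul continuous_const
  have hρsmul : ∀ (c : ℝ) t, ρ (c • t) = c • ρ t := by
    intro c t
    simp only [hρ, Pi.smul_apply, smul_smul, Finset.smul_sum, smul_eq_mul]
  have hρadd : ∀ t u, ρ (t + u) = ρ t + ρ u := by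
    intro t u
    simp only [hρ, Pi.add_apply, add_smul, Finset.sum_add_distrib]
  have hμeq : μ = fun z => Real.pi • ρ (fun α => ‖z α‖ ^ 2) := funext hμ
  have hnonneg_closed : IsClosed {t : Fin d → ℝ | ∀ α, 0 ≤ t α} := by
    have : {t : Fin d → ℝ | ∀ α, 0 ≤ t α} = ⋂ α, {t | 0 ≤ t α} := by
      ext t; simp [Set.mem_iInter]
    rw [this]
    exact isClosed_iInter fun α => isClosed_le continuous_const (continuous_apply α)
  constructor
  · -- forward: μ proper → take s = 0
    intro hproper
    refine ⟨0, fun α => le_rfl, ?_⟩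
    have h0 : IsCompact (μ ⁻¹' {0}) := hproper _ isCompact_singleton
    obtain ⟨R, hR⟩ := isBounded_iff_forall_norm_le.mp h0.isBounded
    rw [Metric.isCompact_iff_isClosed_bounded]
    constructor
    · exact hnonneg_closed.inter (isClosed_eq hρcont continuous_const)
    · rw [isBounded_iff_forall_norm_le]
      refine ⟨R ^ 2, ?_⟩
      rintro t ⟨ht0, htρ⟩
      set z : Fin d → ℂ := fun α => (Real.sqrt (t α) : ℂ) with hz
      have hznorm : ∀ α, ‖z α‖ ^ 2 = t α := by
        intro α
        rw [hz]
        simp only [Complex.norm_real, Real.norm_eq_abs, abs_of_nonneg (Real.sqrt_nonneg _),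
          Real.sq_sqrt (ht0 α)]
      have hzmem : z ∈ μ ⁻¹' {0} := by
        simp only [Set.mem_preimage, Set.mem_singleton_iff, hμ]
        have hsum : ∑ α, ‖z α‖ ^ 2 • w α = (0 : EuclideanSpace ℝ (Fin n)) := by
          rw [Finset.sum_congr rfl (fun α _ => by rw [hznorm α])]
          rw [htρ]; simp
        rw [hsum, smul_zero]
      have hzR : ‖z‖ ≤ R := hR z hzmem
      have hR0 : 0 ≤ R := le_trans (norm_nonneg z) hzR
      rw [pi_norm_le_iff_of_nonneg (by positivity)]
      intro α
      have h1 : ‖z α‖ ≤ R := le_trans (norm_le_pi_norm z α) hzR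
      have : ‖t α‖ = ‖z α‖ ^ 2 := by
        rw [hznorm α, Real.norm_eq_abs, abs_of_nonneg (ht0 α)]
      rw [this]
      exact pow_le_pow_left₀ (norm_nonneg _) h1 2
  · rintro ⟨s, hs, hF⟩
    -- the recession cone of the fiber is trivial
    have hC : ∀ u : Fin d → ℝ, (∀ α, 0 ≤ u α) → ρ u = 0 → u = 0 := by
      intro u hu hρu
      by_contra hne
      obtain ⟨α, hα⟩ : ∃ α, u α ≠ 0 := by
        by_contra h
        push_neg at h
        exact hne (funext h)
      have hαpos : 0 < u α := lt_of_le_of_ne (hu α) (Ne.symm hα)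
      obtain ⟨R, hR⟩ := isBounded_iff_forall_norm_le.mp hF.isBounded
      have hsF : s ∈ {t : Fin d → ℝ | (∀ α, 0 ≤ t α) ∧ ∑ α, t α • w α = ∑ α, s α • w α} :=
        ⟨hs, rfl⟩
      have hR0 : 0 ≤ R := le_trans (norm_nonneg s) (hR s hsF)
      set r : ℝ := (R + 1 + ‖s‖) / u α with hr
      have hrpos : 0 ≤ r := by positivity
      have hmem : s + r • u ∈ {t : Fin d → ℝ | (∀ α, 0 ≤ t α) ∧
          ∑ α, t α • w α = ∑ α, s α • w α} := by
        constructor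
        · intro β
          have : (s + r • u) β = s β + r * u β := rfl
          rw [this]
          exact add_nonneg (hs β) (mul_nonneg hrpos (hu β))
        · have : ∑ β, (s + r • u) β • w β = ρ (s + r • u) := rfl
          rw [this, hρadd, hρsmul, hρu, smul_zero, add_zero]
      have hb : ‖s + r • u‖ ≤ R := hR _ hmem
      have h1 : (s + r • u) α ≤ ‖s + r • u‖ := by
        calc (s + r • u) α ≤ |(s + r • u) α| := le_abs_self _
        _ = ‖(s + r • u) α‖ := (Real.norm_eq_abs _).symm
        _ ≤ ‖s + r • u‖ := norm_le_pi_norm _ α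
      have h2 : r * u α ≤ (s + r • u) α := by
        have : (s + r • u) α = s α + r * u α := rfl
        rw [this]
        linarith [hs α]
      have h3 : r * u α = R + 1 + ‖s‖ := by
        rw [hr]
        field_simp
      have hsn : 0 ≤ ‖s‖ := norm_nonneg s
      linarith
    -- coercivity constant
    have hcoer : ∃ ε > 0, ∀ t : Fin d → ℝ, (∀ α, 0 ≤ t α) → ε * ‖t‖ ≤ ‖ρ t‖ := by
      set S : Set (Fin d → ℝ) := {t | (∀ α, 0 ≤ t α) ∧ ‖t‖ = 1} with hS
      by_cases hne : S.Nonempty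
      · have hScompact : IsCompact S := by
          rw [Metric.isCompact_iff_isClosed_bounded]
          constructor
          · exact hnonneg_closed.inter (isClosed_eq continuous_norm continuous_const)
          · rw [isBounded_iff_forall_norm_le]
            exact ⟨1, fun t ht => le_of_eq ht.2⟩
        obtain ⟨t₀, ht₀S, hmin⟩ := hScompact.exists_isMinOn hne
          ((continuous_norm.comp hρcont)).continuousOn
        have hεpos : 0 < ‖ρ t₀‖ := by
          rw [norm_pos_iff]
          intro h
          have ht₀0 : t₀ = 0 := hC t₀ ht₀S.1 h
          have h1 : ‖t₀‖ = 1 := ht₀S.2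
          rw [ht₀0, norm_zero] at h1
          exact zero_ne_one h1
        refine ⟨‖ρ t₀‖, hεpos, ?_⟩
        intro t ht
        by_cases ht0 : t = 0
        · subst ht0
          simp only [norm_zero, mul_zero]
          exact norm_nonneg _
        · have htn : 0 < ‖t‖ := norm_pos_iff.mpr ht0
          have humem : ‖t‖⁻¹ • t ∈ S := by
            constructor
            · intro α
              have : (‖t‖⁻¹ • t) α = ‖t‖⁻¹ * t α := rfl
              rw [this]
              exact mul_nonneg (inv_nonneg.mpr (norm_nonneg t)) (ht α)
            · rw [norm_smul, norm_inv, norm_norm, inv_mul_cancel₀ (ne_of_gt htn)]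
          have h4 : ‖ρ t₀‖ ≤ ‖ρ (‖t‖⁻¹ • t)‖ := hmin humem
          have heq : ‖ρ (‖t‖⁻¹ • t)‖ = ‖t‖⁻¹ * ‖ρ t‖ := by
            rw [hρsmul, norm_smul, norm_inv, norm_norm]
          rw [heq] at h4
          calc ‖ρ t₀‖ * ‖t‖ ≤ (‖t‖⁻¹ * ‖ρ t‖) * ‖t‖ := by
                exact mul_le_mul_of_nonneg_right h4 (le_of_lt htn)
          _ = ‖ρ t‖ := by field_simp
      · refine ⟨1, one_pos, ?_⟩
        intro t ht
        by_cases ht0 : t = 0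
        · subst ht0; simp
        · exfalso
          apply hne
          have htn : 0 < ‖t‖ := norm_pos_iff.mpr ht0
          refine ⟨‖t‖⁻¹ • t, fun α => ?_, ?_⟩
          · have : (‖t‖⁻¹ • t) α = ‖t‖⁻¹ * t α := rfl
            rw [this]
            exact mul_nonneg (inv_nonneg.mpr (norm_nonneg t)) (ht α)
          · rw [norm_smul, norm_inv, norm_norm, inv_mul_cancel₀ (ne_of_gt htn)]
    obtain ⟨ε, hεpos, hε⟩ := hcoer
    -- properness
    intro K hK
    have hμcont : Continuous μ := by
      rw [hμeq]
      apply Continuous.fun_const_smul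
      exact hρcont.comp (continuous_pi fun α => ((continuous_apply α).norm).pow 2)
    rw [Metric.isCompact_iff_isClosed_bounded]
    constructor
    · exact hK.isClosed.preimage hμcont
    · obtain ⟨M, hM⟩ := isBounded_iff_forall_norm_le.mp hK.isBounded
      rw [isBounded_iff_forall_norm_le]
      have hπ : (0:ℝ) < Real.pi := Real.pi_pos
      refine ⟨Real.sqrt (M / (Real.pi * ε)), ?_⟩
      intro z hz
      set t : Fin d → ℝ := fun α => ‖z α‖ ^ 2 with ht
      have ht0 : ∀ α, 0 ≤ t α := fun α => sq_nonneg _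
      have hμz : μ z = Real.pi • ρ t := by rw [hμ]
      have hnorm : ‖μ z‖ = Real.pi * ‖ρ t‖ := by
        rw [hμz, norm_smul, Real.norm_eq_abs, abs_of_pos hπ]
      have hμK : ‖μ z‖ ≤ M := hM _ hz
      have hbound : ε * ‖t‖ ≤ M / Real.pi := by
        have h1 : ε * ‖t‖ ≤ ‖ρ t‖ := hε t ht0
        have h2 : ‖ρ t‖ ≤ M / Real.pi := by
          rw [hnorm] at hμK
          rw [le_div_iff₀ hπ]
          linarith [mul_comm ‖ρ t‖ Real.pi]
        linarith
      have htle : ‖t‖ ≤ M / (Real.pi * ε) := by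
        rw [le_div_iff₀ (by positivity)]
        calc ‖t‖ * (Real.pi * ε) = Real.pi * (ε * ‖t‖) := by ring
        _ ≤ Real.pi * (M / Real.pi) := by
            exact mul_le_mul_of_nonneg_left hbound (le_of_lt hπ)
        _ = M := by field_simp
      rw [pi_norm_le_iff_of_nonneg (Real.sqrt_nonneg _)]
      intro α
      have h1 : ‖z α‖ ^ 2 ≤ M / (Real.pi * ε) := by
        calc ‖z α‖ ^ 2 = t α := rfl
        _ ≤ ‖t α‖ := le_abs_self _
        _ ≤ ‖t‖ := norm_le_pi_norm t α
        _ ≤ M / (Real.pi * ε) := htle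
      calc ‖z α‖ = Real.sqrt (‖z α‖ ^ 2) := (Real.sqrt_sq (norm_nonneg _)).symm
      _ ≤ Real.sqrt (M / (Real.pi * ε)) := Real.sqrt_le_sqrt h1
end

section
/- Let w_1,…,w_d ∈ ℝ^n, τ ∈ ℝ^n, ξ ∈ ℝ^n, and z ∈ ℂ^d. Suppose that π Σ_{α=1}^d |z_α|² w_α = τ and π Σ_{α=1}^d exp(4π⟨w_α, ξ⟩) |z_α|² w_α = τ, and suppose that for every ξ' ∈ ℝ^n, if ⟨w_α, ξ'⟩ = 0 for every α with z_α ≠ 0, then ξ' = 0. Then ξ = 0. -/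
/-- if both z and exp(iξ)·z lie in the level set μ⁻¹(τ) of the
moment map μ(z) = π Σ_α |z_α|² w_α, and the torus action is (infinitesimally)
locally free at z, then ξ = 0. -/
theorem stabilizer_in_compact_torus (d n : ℕ)
    (w : Fin d → EuclideanSpace ℝ (Fin n))
    (τ ξ : EuclideanSpace ℝ (Fin n)) (z : Fin d → ℂ)
    (h1 : Real.pi • ∑ α, ‖z α‖ ^ 2 • w α = τ)
    (h2 : Real.pi •
        ∑ α, (Real.exp (4 * Real.pi * (inner ℝ (w α) ξ : ℝ)) * ‖z α‖ ^ 2) • w α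
      = τ)
    (hfree : ∀ ξ' : EuclideanSpace ℝ (Fin n),
      (∀ α, z α ≠ 0 → (inner ℝ (w α) ξ' : ℝ) = 0) → ξ' = 0) :
    ξ = 0 := by
  apply hfree
  have heq : ∑ α, (Real.exp (4 * Real.pi * (inner ℝ (w α) ξ : ℝ)) * ‖z α‖ ^ 2) • w α
      = ∑ α, ‖z α‖ ^ 2 • w α :=
    smul_right_injective _ Real.pi_ne_zero (h2.trans h1.symm)
  have h3 : ∑ α, ((Real.exp (4 * Real.pi * (inner ℝ (w α) ξ : ℝ)) - 1) * ‖z α‖ ^ 2) • w α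
      = 0 := by
    have : ∑ α, ((Real.exp (4 * Real.pi * (inner ℝ (w α) ξ : ℝ)) - 1) * ‖z α‖ ^ 2) • w α
        = ∑ α, ((Real.exp (4 * Real.pi * (inner ℝ (w α) ξ : ℝ)) * ‖z α‖ ^ 2) • w α
            - ‖z α‖ ^ 2 • w α) := by
      refine Finset.sum_congr rfl fun α _ => ?_
      rw [sub_mul, one_mul, sub_smul]
    rw [this, Finset.sum_sub_distrib, heq, sub_self]
  have h4 : ∑ α, ((Real.exp (4 * Real.pi * (inner ℝ (w α) ξ : ℝ)) - 1) * ‖z α‖ ^ 2)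
      * (inner ℝ (w α) ξ : ℝ) = 0 := by
    have := congrArg (fun v : EuclideanSpace ℝ (Fin n) => (inner ℝ v ξ : ℝ)) h3
    simp only [sum_inner, real_inner_smul_left, inner_zero_left] at this
    exact this
  have hnonneg : ∀ α ∈ Finset.univ,
      0 ≤ ((Real.exp (4 * Real.pi * (inner ℝ (w α) ξ : ℝ)) - 1) * ‖z α‖ ^ 2)
        * (inner ℝ (w α) ξ : ℝ) := by
    intro α _
    have hn : (0:ℝ) ≤ ‖z α‖ ^ 2 := sq_nonneg _
    rcases le_or_gt 0 (inner ℝ (w α) ξ : ℝ) with hs | hs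
    · have h1' : (1:ℝ) ≤ Real.exp (4 * Real.pi * (inner ℝ (w α) ξ : ℝ)) := by
        rw [Real.one_le_exp_iff]
        positivity
      exact mul_nonneg (mul_nonneg (by linarith) hn) hs
    · have h1' : Real.exp (4 * Real.pi * (inner ℝ (w α) ξ : ℝ)) ≤ 1 := by
        rw [Real.exp_le_one_iff]
        nlinarith [Real.pi_pos]
      have key := mul_nonneg (mul_nonneg
        (by linarith : (0:ℝ) ≤ 1 - Real.exp (4 * Real.pi * (inner ℝ (w α) ξ : ℝ))) hn)
        (by linarith : (0:ℝ) ≤ -(inner ℝ (w α) ξ : ℝ))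
      nlinarith [key]
  have hzero := (Finset.sum_eq_zero_iff_of_nonneg hnonneg).mp h4
  intro α hzα
  have hterm := hzero α (Finset.mem_univ α)
  have hn : (0:ℝ) < ‖z α‖ ^ 2 := pow_pos (norm_pos_iff.mpr hzα) 2
  rcases mul_eq_zero.mp hterm with h | h
  · rcases mul_eq_zero.mp h with h' | h'
    · have hx : 4 * Real.pi * (inner ℝ (w α) ξ : ℝ) = 0 := by
        have hexp : Real.exp (4 * Real.pi * (inner ℝ (w α) ξ : ℝ)) = Real.exp 0 := by
          rw [Real.exp_zero]; linarith
        exact Real.exp_eq_exp.mp hexp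
      have : (4 * Real.pi : ℝ) ≠ 0 := by positivity
      exact (mul_eq_zero.mp hx).resolve_left this
    · exact absurd h' hn.ne'
  · exact h
end

section
/- Let w_1,…,w_d ∈ ℝ^n, let τ ∈ ℝ^n, and let μ : ℂ^d → ℝ^n be given by μ(z) = π Σ_{α=1}^d |z_α|² w_α. Assume that for every z ∈ μ⁻¹(τ) and every ξ ∈ ℝ^n, if ⟨w_α, ξ⟩ = 0 for all α with z_α ≠ 0, then ξ = 0. Then the map φ : ℝ^n × μ⁻¹(τ) → ℂ^d defined by φ(ξ, z) = (e^{2π⟨w_α,ξ⟩} z_α)_{α=1,…,d} is injective. -/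
/-- if the torus action is (infinitesimally) locally free on the
level set μ⁻¹(τ) of μ(z) = π Σ_α |z_α|² w_α, then the map
φ(ξ,z) = (e^{2π⟨w_α,ξ⟩} z_α)_α on ℝ^n × μ⁻¹(τ) is injective. -/
theorem imaginary_action_injective (d n : ℕ)
    (w : Fin d → EuclideanSpace ℝ (Fin n)) (τ : EuclideanSpace ℝ (Fin n))
    (μ : (Fin d → ℂ) → EuclideanSpace ℝ (Fin n))
    (hμ : ∀ z, μ z = Real.pi • ∑ α, ‖z α‖ ^ 2 • w α)
    (hfree : ∀ z, μ z = τ → ∀ ξ : EuclideanSpace ℝ (Fin n),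
      (∀ α, z α ≠ 0 → (inner ℝ (w α) ξ : ℝ) = 0) → ξ = 0) :
    ∀ (ξ₁ ξ₂ : EuclideanSpace ℝ (Fin n)) (z₁ z₂ : Fin d → ℂ),
      μ z₁ = τ → μ z₂ = τ →
      (fun α => (Real.exp (2 * Real.pi * (inner ℝ (w α) ξ₁ : ℝ)) : ℂ) * z₁ α) =
        (fun α => (Real.exp (2 * Real.pi * (inner ℝ (w α) ξ₂ : ℝ)) : ℂ) * z₂ α) →
      ξ₁ = ξ₂ ∧ z₁ = z₂ := by
  intro ξ₁ ξ₂ z₁ z₂ h₁ h₂ heq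
  set ξ : EuclideanSpace ℝ (Fin n) := ξ₁ - ξ₂ with hξdef
  set c : Fin d → ℝ := fun α => (inner ℝ (w α) ξ : ℝ) with hcdef
  have hc : ∀ α, c α = (inner ℝ (w α) ξ₁ : ℝ) - (inner ℝ (w α) ξ₂ : ℝ) := by
    intro α; simp [hcdef, hξdef, inner_sub_right]
  -- z₂ α = e^{2π c α} z₁ α
  have hz2 : ∀ α, z₂ α = (Real.exp (2 * Real.pi * c α) : ℂ) * z₁ α := by
    intro α
    have h := congrFun heq α
    have hne : (Real.exp (2 * Real.pi * (inner ℝ (w α) ξ₂ : ℝ)) : ℂ) ≠ 0 := by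
      exact_mod_cast Real.exp_ne_zero _
    have : (2 : ℝ) * Real.pi * c α
        = 2 * Real.pi * (inner ℝ (w α) ξ₁ : ℝ) - 2 * Real.pi * (inner ℝ (w α) ξ₂ : ℝ) := by
      rw [hc]; ring
    rw [this, Real.exp_sub, Complex.ofReal_div, div_mul_eq_mul_div, eq_div_iff hne]
    linear_combination -h
  -- norms
  have hnorm : ∀ α, ‖z₂ α‖ ^ 2 = Real.exp (2 * Real.pi * c α) ^ 2 * ‖z₁ α‖ ^ 2 := by
    intro α
    rw [hz2 α, norm_mul, mul_pow]
    congr 1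
    rw [Complex.norm_real, Real.norm_eq_abs, abs_of_pos (Real.exp_pos _)]
  -- pairing the moment map with ξ
  have hpair : ∀ z : Fin d → ℂ,
      (inner ℝ (μ z) ξ : ℝ) = Real.pi * ∑ α, ‖z α‖ ^ 2 * c α := by
    intro z
    rw [hμ z, real_inner_smul_left, sum_inner]
    congr 1
    refine Finset.sum_congr rfl fun α _ => ?_
    rw [real_inner_smul_left]
  have key : (0 : ℝ) = Real.pi * ∑ α, ‖z₁ α‖ ^ 2 *
      (c α * (Real.exp (2 * Real.pi * c α) ^ 2 - 1)) := by
    have e1 := hpair z₁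
    have e2 := hpair z₂
    rw [h₁] at e1; rw [h₂] at e2
    have : Real.pi * ∑ α, ‖z₂ α‖ ^ 2 * c α
        = Real.pi * ∑ α, ‖z₁ α‖ ^ 2 * c α := by rw [← e1, ← e2]
    calc (0 : ℝ) = Real.pi * ∑ α, ‖z₂ α‖ ^ 2 * c α
          - Real.pi * ∑ α, ‖z₁ α‖ ^ 2 * c α := by rw [this]; ring
      _ = Real.pi * ∑ α, (‖z₂ α‖ ^ 2 * c α - ‖z₁ α‖ ^ 2 * c α) := by
          rw [Finset.sum_sub_distrib]; ring
      _ = Real.pi * ∑ α, ‖z₁ α‖ ^ 2 *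
            (c α * (Real.exp (2 * Real.pi * c α) ^ 2 - 1)) := by
          congr 1
          refine Finset.sum_congr rfl fun α _ => ?_
          rw [hnorm α]; ring
  -- each term is nonnegative
  have hterm_nonneg : ∀ α : Fin d, 0 ≤ ‖z₁ α‖ ^ 2 *
      (c α * (Real.exp (2 * Real.pi * c α) ^ 2 - 1)) := by
    intro α
    apply mul_nonneg (sq_nonneg _)
    rcases le_or_gt 0 (c α) with hca | hca
    · apply mul_nonneg hca
      have h1 : (1 : ℝ) ≤ Real.exp (2 * Real.pi * c α) :=
        Real.one_le_exp (by positivity)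
      nlinarith
    · have h1 : Real.exp (2 * Real.pi * c α) ≤ 1 := by
        rw [Real.exp_le_one_iff]
        have := Real.pi_pos
        nlinarith
      have h0 : 0 < Real.exp (2 * Real.pi * c α) := Real.exp_pos _
      nlinarith [mul_nonneg (neg_nonneg.mpr hca.le)
        (by nlinarith : (0:ℝ) ≤ 1 - Real.exp (2 * Real.pi * c α) ^ 2)]
  -- the sum is zero, hence each term is zero
  have hsum0 : ∑ α, ‖z₁ α‖ ^ 2 *
      (c α * (Real.exp (2 * Real.pi * c α) ^ 2 - 1)) = 0 := by
    rcases mul_eq_zero.mp key.symm with h | h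
    · exact absurd h Real.pi_ne_zero
    · exact h
  have hterm0 : ∀ α : Fin d, ‖z₁ α‖ ^ 2 *
      (c α * (Real.exp (2 * Real.pi * c α) ^ 2 - 1)) = 0 := by
    have := (Finset.sum_eq_zero_iff_of_nonneg
      (fun α _ => hterm_nonneg α)).mp hsum0
    exact fun α => this α (Finset.mem_univ α)
  -- c α = 0 whenever z₁ α ≠ 0
  have hc0 : ∀ α, z₁ α ≠ 0 → c α = 0 := by
    intro α hzα
    by_contra hca
    have hznorm : 0 < ‖z₁ α‖ ^ 2 := pow_pos (norm_pos_iff.mpr hzα) 2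
    have h2 : c α * (Real.exp (2 * Real.pi * c α) ^ 2 - 1) = 0 := by
      have := hterm0 α
      rcases mul_eq_zero.mp this with h | h
      · exact absurd h (pow_ne_zero _ (norm_ne_zero_iff.mpr hzα))
      · exact h
    rcases mul_eq_zero.mp h2 with h | h
    · exact hca h
    · rcases lt_or_gt_of_ne hca with hlt | hgt
      · have h1 : Real.exp (2 * Real.pi * c α) < 1 := by
          rw [Real.exp_lt_one_iff]
          have := Real.pi_pos
          nlinarith
        have h0 : 0 < Real.exp (2 * Real.pi * c α) := Real.exp_pos _
        nlinarith
      · have h1 : (1 : ℝ) < Real.exp (2 * Real.pi * c α) := by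
          rw [Real.one_lt_exp_iff]
          have := Real.pi_pos
          nlinarith
        nlinarith
  have hξ0 : ξ = 0 := hfree z₁ h₁ ξ hc0
  have hξeq : ξ₁ = ξ₂ := by
    have := hξ0
    rw [hξdef, sub_eq_zero] at this
    exact this
  refine ⟨hξeq, funext fun α => ?_⟩
  have h := congrFun heq α
  rw [hξeq] at h
  have hne : (Real.exp (2 * Real.pi * (inner ℝ (w α) ξ₂ : ℝ)) : ℂ) ≠ 0 := by
    exact_mod_cast Real.exp_ne_zero _
  exact mul_left_cancel₀ hne h
end
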